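/- Let K be a number field and p(t) = t⁴ + at³ + bt² + ct + d a separable polynomial in K[t]. Let β ∈ K be a root of the cubic resolvent r(t) = t³ − bt² + (ac − 4d)t − a²d + 4bd − c², and set Δ₁ = β² − 4d and Δ₂ = 4β + a² − 4b. If Δ₂ ≠ 0, then p(t) factors as a product of two monic quadratic polynomials with coefficients in K(√Δ₂); if Δ₂ = 0, then p(t) factors as a product of two monic quadratic polynomials with coefficients in K(√Δ₁). -/

import Mathlib

open Polynomial IntermediateField
open scoped Classical

lemma quad_monic' {F : Type*} [Field F] (u v : F) :
    (X ^ 2 + C u * X + C v : F[X]).Monic := by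
  have h : (C u * X + C v : F[X]).degree ≤ 1 := degree_linear_le
  have := monic_X_pow_add (n := 2) (p := (C u * X + C v : F[X]))
    (h.trans_lt (by norm_num))
  simpa [add_assoc] using this

lemma quad_deg' {F : Type*} [Field F] (u v : F) :
    (X ^ 2 + C u * X + C v : F[X]).degree = 2 := by
  have h : (X ^ 2 + C u * X + C v : F[X]) = C 1 * X ^ 2 + C u * X + C v := by
    rw [map_one, one_mul]
  rw [h]
  exact degree_quadratic one_ne_zero

/-- Let `p(t) = t⁴ + at³ + bt² + ct + d` be separable over a number field `K`, let `β ∈ K`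
be a root of the cubic resolvent `r(t) = t³ − bt² + (ac − 4d)t − a²d + 4bd − c²`, and set
`Δ₁ = β² − 4d`, `Δ₂ = 4β + a² − 4b`. If `Δ₂ ≠ 0` then `p` factors as a product of two
monic quadratics over `K(√Δ₂)`; if `Δ₂ = 0` then it does so over `K(√Δ₁)`. -/
theorem quartic_factors_over_quadratic_extension (K : Type*) [Field K] [NumberField K]
    (a b c d β : K)
    (hsep : (X ^ 4 + C a * X ^ 3 + C b * X ^ 2 + C c * X + C d : K[X]).Separable)
    (hβ : β ^ 3 - b * β ^ 2 + (a * c - 4 * d) * β - a ^ 2 * d + 4 * b * d - c ^ 2 = 0)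
    (s : AlgebraicClosure K)
    (hs : s ^ 2 = algebraMap K (AlgebraicClosure K)
      (if 4 * β + a ^ 2 - 4 * b = 0 then β ^ 2 - 4 * d else 4 * β + a ^ 2 - 4 * b)) :
    ∃ q₁ q₂ : Polynomial K⟮s⟯, q₁.Monic ∧ q₂.Monic ∧ q₁.degree = 2 ∧ q₂.degree = 2 ∧
      (X ^ 4 + C a * X ^ 3 + C b * X ^ 2 + C c * X + C d : K[X]).map
        (algebraMap K K⟮s⟯) = q₁ * q₂ := by
  set L := K⟮s⟯ with hL
  set f := algebraMap K L with hf
  set S : L := IntermediateField.AdjoinSimple.gen K s with hSdef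
  have hinj := (algebraMap L (AlgebraicClosure K)).injective
  have hS2 : S ^ 2 = f (if 4 * β + a ^ 2 - 4 * b = 0 then β ^ 2 - 4 * d
      else 4 * β + a ^ 2 - 4 * b) := by
    apply hinj
    rw [map_pow, IntermediateField.AdjoinSimple.algebraMap_gen, hs,
      IsScalarTower.algebraMap_apply K L (AlgebraicClosure K)]
  have key : (2 * c - a * β) ^ 2 = (β ^ 2 - 4 * d) * (4 * β + a ^ 2 - 4 * b) := by
    linear_combination (-4 : K) * hβ
  set A := f a with hA0
  set B := f b with hB0
  set Cc := f c with hC0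
  set D := f d with hD0
  set Bβ := f β with hBβ0
  have hmap : (X ^ 4 + C a * X ^ 3 + C b * X ^ 2 + C c * X + C d : K[X]).map f
      = X ^ 4 + C A * X ^ 3 + C B * X ^ 2 + C Cc * X + C D := by
    simp [Polynomial.map_add, Polynomial.map_mul, Polynomial.map_pow]
    rfl
  have key' : (2 * Cc - A * Bβ) ^ 2 = (Bβ ^ 2 - 4 * D) * (4 * Bβ + A ^ 2 - 4 * B) := by
    have := congrArg f key
    simpa [map_add, map_sub, map_mul, map_pow, map_ofNat] using this
  have main : ∀ u v u' v' : L, A = u + u' → B = v + v' + u * u' →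
      Cc = u * v' + u' * v → D = v * v' →
      ∃ q₁ q₂ : Polynomial L, q₁.Monic ∧ q₂.Monic ∧ q₁.degree = 2 ∧ q₂.degree = 2 ∧
        (X ^ 4 + C a * X ^ 3 + C b * X ^ 2 + C c * X + C d : K[X]).map f = q₁ * q₂ := by
    intro u v u' v' h1 h2 h3 h4
    refine ⟨X ^ 2 + C u * X + C v, X ^ 2 + C u' * X + C v',
      quad_monic' u v, quad_monic' u' v', quad_deg' u v, quad_deg' u' v', ?_⟩
    rw [hmap, h1, h2, h3, h4]
    simp only [map_add, map_mul]
    ring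
  by_cases h2 : 4 * β + a ^ 2 - 4 * b = 0
  · rw [if_pos h2] at hS2
    have h2' : 4 * Bβ + A ^ 2 - 4 * B = 0 := by
      have := congrArg f h2
      simpa [map_add, map_sub, map_mul, map_pow, map_ofNat] using this
    have hS2' : S ^ 2 = Bβ ^ 2 - 4 * D := by
      rw [hS2]; simp [map_sub, map_mul, map_pow, map_ofNat]; rfl
    have hc2 : 2 * Cc = A * Bβ := by
      have hz : (2 * Cc - A * Bβ) ^ 2 = 0 := by rw [key', h2', mul_zero]
      have hzz := pow_eq_zero_iff (n := 2) (two_ne_zero) |>.mp hz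
      linear_combination hzz
    exact main (A / 2) ((Bβ + S) / 2) (A / 2) ((Bβ - S) / 2)
      (by ring) (by linear_combination (-(1 : L) / 4) * h2')
      (by linear_combination hc2 / 2) (by linear_combination hS2' / 4)
  · rw [if_neg h2] at hS2
    have hS2' : S ^ 2 = 4 * Bβ + A ^ 2 - 4 * B := by
      rw [hS2]; simp [map_add, map_sub, map_mul, map_pow, map_ofNat]; rfl
    have hSne : S ≠ 0 := by
      intro h
      have : f (4 * β + a ^ 2 - 4 * b) = 0 := by rw [← hS2, h]; ring
      exact h2 ((_root_.map_eq_zero f).mp this)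
    set w : L := (2 * Cc - A * Bβ) / S with hw0
    have hw : S * w = 2 * Cc - A * Bβ := by
      rw [hw0]; field_simp
    have hw2 : w ^ 2 = Bβ ^ 2 - 4 * D := by
      have hmain : S ^ 2 * w ^ 2 = S ^ 2 * (Bβ ^ 2 - 4 * D) := by
        linear_combination (S * w + (2 * Cc - A * Bβ)) * hw + key'
          - (Bβ ^ 2 - 4 * D) * hS2'
      exact mul_left_cancel₀ (pow_ne_zero 2 hSne) hmain
    exact main ((A + S) / 2) ((Bβ - w) / 2) ((A - S) / 2) ((Bβ + w) / 2)
      (by ring) (by linear_combination hS2' / 4)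
      (by linear_combination (-(1 : L) / 2) * hw) (by linear_combination hw2 / 4)
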